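/- Let s ∈ ℝ and let C be the UQ × UQ matrix with 1 on the diagonal, with off-diagonal entries s at positions ((q,u),(q',u')) where q = q' or u = u' (but not both), and 0 elsewhere (indexing pairs (q,u) with q ∈ {1,...,Q}, u ∈ {1,...,U}). Suppose C is invertible. Then C⁻¹ = 1_{Q×Q} ⊗ A + I_{Q×Q} ⊗ B, where A is the U×U matrix with c on the diagonal and d off-diagonal, B is the U×U matrix with a−c on the diagonal and b−d off-diagonal, and (a,b,c,d) is the unique solution of the linear system: a + (U−1)sb + (Q−1)sc = 1; sa + ((U−2)s+1)b + (Q−1)sd = 0; sa + ((Q−2)s+1)c + (U−1)sd = 0; sb + sc + ((U+Q−4)s+1)d = 0. -/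
import Mathlib


open Matrix Kronecker

/-- The `n × n` all-ones matrix. -/
def allOnes (n : ℕ) : Matrix (Fin n) (Fin n) ℝ := Matrix.of fun _ _ => 1

/-- Let `C` be the `UQ × UQ` matrix with `1` on the diagonal, `s` at off-diagonal
positions sharing exactly one of the two indices, and `0` elsewhere, i.e.
`C = s(1_{Q×Q} ⊗ I_U + I_Q ⊗ 1_{U×U}) + (1-2s)I`.  If `C` is invertible and `(a,b,c,d)`
solves the stated linear system, then `C⁻¹ = 1_{Q×Q} ⊗ A + I_{Q×Q} ⊗ B` with `A` having
`c` on the diagonal and `d` off it, and `B` having `a-c` on the diagonal and `b-d` off it. -/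
theorem rasch_Cy_inverse_structure (U Q : ℕ) (hU : 2 ≤ U) (hQ : 2 ≤ Q) (s : ℝ)
    (C : Matrix (Fin Q × Fin U) (Fin Q × Fin U) ℝ)
    (hC : C = s • (allOnes Q ⊗ₖ (1 : Matrix (Fin U) (Fin U) ℝ) +
        (1 : Matrix (Fin Q) (Fin Q) ℝ) ⊗ₖ allOnes U) + (1 - 2 * s) • 1)
    (hInv : IsUnit C)
    (a b c d : ℝ)
    (h1 : a + (U - 1 : ℝ) * s * b + (Q - 1 : ℝ) * s * c = 1)
    (h2 : s * a + (((U : ℝ) - 2) * s + 1) * b + (Q - 1 : ℝ) * s * d = 0)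
    (h3 : s * a + (((Q : ℝ) - 2) * s + 1) * c + (U - 1 : ℝ) * s * d = 0)
    (h4 : s * b + s * c + (((U : ℝ) + (Q : ℝ) - 4) * s + 1) * d = 0)
    (A B : Matrix (Fin U) (Fin U) ℝ)
    (hA : A = Matrix.of fun i j => if i = j then c else d)
    (hB : B = Matrix.of fun i j => if i = j then a - c else b - d) :
    C⁻¹ = allOnes Q ⊗ₖ A + (1 : Matrix (Fin Q) (Fin Q) ℝ) ⊗ₖ B := by
  apply Matrix.inv_eq_right_inv
  have sumlem : ∀ (n : ℕ) (j : Fin n) (x y : ℝ),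
      (∑ k : Fin n, if k = j then x else y) = x + ((n:ℝ) - 1) * y := by
    intro n j x y
    have h : ∀ k : Fin n, (if k = j then x else y) = y + (if k = j then x - y else 0) := by
      intro k; split <;> ring
    simp [h, Finset.sum_add_distrib, Finset.sum_ite_eq']
    ring
  have hJJ : allOnes Q * allOnes Q = (Q:ℝ) • allOnes Q := by
    ext i j; simp [allOnes, Matrix.mul_apply]
  have hJA : allOnes U * A = (c + ((U:ℝ)-1)*d) • allOnes U := by
    ext i j; simp [allOnes, hA, Matrix.mul_apply, sumlem]
  have hJB : allOnes U * B = ((a-c) + ((U:ℝ)-1)*(b-d)) • allOnes U := by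
    ext i j; simp [allOnes, hB, Matrix.mul_apply, sumlem]
  rw [hC]
  simp only [add_mul, mul_add, Matrix.smul_mul, Matrix.mul_smul,
    ← Matrix.mul_kronecker_mul, Matrix.one_mul, Matrix.mul_one, hJJ, hJA, hJB,
    Matrix.smul_kronecker, Matrix.kronecker_smul, smul_smul, Matrix.one_kronecker_one]
  ext ⟨p,u⟩ ⟨q,v⟩
  simp only [Matrix.add_apply, Matrix.smul_apply, Matrix.kroneckerMap_apply, allOnes,
    Matrix.one_apply, hA, hB, Matrix.of_apply, smul_eq_mul]
  by_cases hpq : p = q <;> by_cases huv : u = v <;>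
    simp [hpq, huv, Prod.ext_iff] <;>
    [linear_combination h1; linear_combination h2; linear_combination h3; linear_combination h4]
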